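/- For all real numbers $a, b > 0$, one has $(a-b)(\log a - \log b) \ge 4(\sqrt{a}-\sqrt{b})^2$. -/

import Mathlib

private lemma two_sub_le_log_key (y : ℝ) (hy : 1 ≤ y) :
    2 * (y - 1) ≤ (y + 1) * Real.log y := by
  set f : ℝ → ℝ := fun x => (x + 1) * Real.log x - 2 * (x - 1) with hf
  have hderiv : ∀ x ∈ interior (Set.Ici (1:ℝ)),
      HasDerivAt f (Real.log x + (x + 1) * x⁻¹ - 2) x := by
    intro x hx
    rw [interior_Ici, Set.mem_Ioi] at hx
    have hx0 : x ≠ 0 := by positivity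
    have h1 : HasDerivAt (fun x : ℝ => (x + 1) * Real.log x)
        (1 * Real.log x + (x + 1) * x⁻¹) x :=
      ((hasDerivAt_id x).add_const 1).mul (Real.hasDerivAt_log hx0)
    have h2 : HasDerivAt (fun x : ℝ => 2 * (x - 1)) 2 x := by
      simpa using ((hasDerivAt_id x).sub_const 1).const_mul 2
    have := h1.sub h2
    exact this.congr_deriv (by ring)
  have hmono : MonotoneOn f (Set.Ici 1) := by
    apply monotoneOn_of_deriv_nonneg (convex_Ici 1)
    · apply ContinuousOn.sub
      · exact (continuousOn_id.add continuousOn_const).mul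
          (Real.continuousOn_log.mono (by intro x hx; simp at hx ⊢; intro h; simp [h] at hx; linarith))
      · fun_prop
    · intro x hx
      exact (hderiv x hx).differentiableAt.differentiableWithinAt
    · intro x hx
      rw [(hderiv x hx).deriv]
      rw [interior_Ici, Set.mem_Ioi] at hx
      have hx0 : 0 < x := by linarith
      have hlog : Real.log (1 / x) ≤ 1 / x - 1 :=
        Real.log_le_sub_one_of_pos (by positivity)
      rw [Real.log_div one_ne_zero (ne_of_gt hx0), Real.log_one] at hlog
      have hxx : (x + 1) * x⁻¹ = 1 + 1 / x := by field_simp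
      linarith
  have h1 : (1:ℝ) ∈ Set.Ici (1:ℝ) := by norm_num
  have hy' : y ∈ Set.Ici (1:ℝ) := hy
  have := hmono h1 hy' hy
  simp only [hf, Real.log_one] at this
  linarith

/-- Elementary inequality: `(a-b)(log a - log b) ≥ 4(√a - √b)²` for positive reals. -/
theorem log_diff_mul_ge_four_sq_sqrt_diff (a b : ℝ) (ha : 0 < a) (hb : 0 < b) :
    4 * (Real.sqrt a - Real.sqrt b) ^ 2 ≤ (a - b) * (Real.log a - Real.log b) := by
  -- it suffices to treat the case b ≤ a, by symmetry
  wlog hab : b ≤ a with H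
  · have := H b a hb ha (le_of_not_ge hab)
    have e1 : (Real.sqrt a - Real.sqrt b) ^ 2 = (Real.sqrt b - Real.sqrt a) ^ 2 := by ring
    have e2 : (a - b) * (Real.log a - Real.log b)
        = (b - a) * (Real.log b - Real.log a) := by ring
    rw [e1, e2]; exact this
  set s := Real.sqrt a with hs
  set t := Real.sqrt b with ht
  have hs0 : 0 < s := Real.sqrt_pos.mpr ha
  have ht0 : 0 < t := Real.sqrt_pos.mpr hb
  have hst : t ≤ s := Real.sqrt_le_sqrt hab
  have hy : 1 ≤ s / t := (one_le_div ht0).mpr hst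
  have key := two_sub_le_log_key (s / t) hy
  rw [Real.log_div (ne_of_gt hs0) (ne_of_gt ht0)] at key
  -- multiply through by t > 0
  have key2 : 2 * (s - t) ≤ (s + t) * (Real.log s - Real.log t) := by
    have := mul_le_mul_of_nonneg_right key (le_of_lt ht0)
    have e : (s / t + 1) * (Real.log s - Real.log t) * t
        = (s + t) * (Real.log s - Real.log t) := by
      field_simp
    have e' : 2 * (s / t - 1) * t = 2 * (s - t) := by field_simp
    linarith [e ▸ e' ▸ this]
  -- multiply by (s - t) ≥ 0
  have key3 := mul_le_mul_of_nonneg_left key2 (sub_nonneg.mpr hst)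
  have hsa : s ^ 2 = a := Real.sq_sqrt ha.le
  have htb : t ^ 2 = b := Real.sq_sqrt hb.le
  have hla : Real.log s = Real.log a / 2 := Real.log_sqrt ha.le
  have hlb : Real.log t = Real.log b / 2 := Real.log_sqrt hb.le
  have hla' : Real.log a = 2 * Real.log s := by linarith
  have hlb' : Real.log b = 2 * Real.log t := by linarith
  rw [hla', hlb', ← hsa, ← htb]
  nlinarith [key3]
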